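/- The language USQUARE = {1^m : m = n^2 for some n ≥ 0} can be recognized by a two-alternating AQFA: there exists an AQFA over the unary alphabet {1}, in which along every path of every computation tree no universal classical state is ever followed by an existential classical state, whose language is exactly USQUARE. -/

import Mathlib

noncomputable section

open Matrix

/-!
A realtime alternating quantum finite automaton (AQFA) over input alphabet `α`.

* Classical states: `Fin m`, partitioned into existential and universal states by `isUniv`,
  with initial classical state `c₀` and accepting classical states `acceptC`.
* Quantum register: basis states indexed by `Fin n`, initial quantum state the unit vector `v₀`.
* For each classical state and tape symbol, a superoperator is given by a finite list of
  outcomes, each consisting of an n×n operation element together with a next classical state;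
  the operation elements `E` satisfy `Σ Eᴴ E = I`.
* Tape symbols: `Option α`, with `none` the end-marker ¢.
* On input `w`, the automaton processes ¢ w ¢, making two transitions per tape symbol; this is
  realized by listing every tape symbol twice, one occurrence per transition.
-/
structure AQFA (α : Type) where
  m : ℕ
  n : ℕ
  /-- which classical states are universal (`true`); the rest are existential -/
  isUniv : Fin m → Bool
  /-- the initial classical state -/
  c₀ : Fin m
  /-- the accepting classical states -/
  acceptC : Fin m → Bool
  /-- the initial quantum state -/
  v₀ : Fin n → ℂ
  /-- the initial quantum state is a unit vector -/
  v₀_unit : ∑ i, Complex.normSq (v₀ i) = 1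
  /-- for each classical state and tape symbol, the list of outcomes: operation elements
  paired with next classical states -/
  trans : Fin m → Option α → List (Matrix (Fin n) (Fin n) ℂ × Fin m)
  /-- the superoperator condition `Σ_k E_kᴴ E_k = I` -/
  valid : ∀ (c : Fin m) (σ : Option α),
    ((trans c σ).map fun p => (p.1)ᴴ * p.1).sum = (1 : Matrix (Fin n) (Fin n) ℂ)

namespace AQFA

variable {α : Type} (A : AQFA α)

/-- The tape ¢ w ¢ with every tape symbol listed twice (two transitions per tape symbol);
`none` is the end-marker ¢. -/
def tape (w : List α) : List (Option α) :=
  (none :: (w.map some) ++ [none]).flatMap fun σ => [σ, σ]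

/-- AND–OR evaluation of the computation tree from the node with classical state `cfg.1` and
(unnormalized, nonzero) quantum state `cfg.2`, on the given remaining tape (each tape symbol
occurring twice, one occurrence per transition).  A leaf is true iff its classical state is
accepting; an existential node is true iff some child is true; a universal node is true iff
all children are true; the children are indexed by the outcomes `p` with `p.1 *ᵥ v ≠ 0`. -/
def Acc : List (Option α) → Fin A.m × (Fin A.n → ℂ) → Prop
  | [], cfg => A.acceptC cfg.1
  | σ :: rest, (c, v) =>
      if A.isUniv c then
        ∀ p ∈ A.trans c σ, p.1.mulVec v ≠ 0 → Acc rest (p.2, p.1.mulVec v)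
      else
        ∃ p ∈ A.trans c σ, p.1.mulVec v ≠ 0 ∧ Acc rest (p.2, p.1.mulVec v)

/-- `A` accepts `w` iff the root of the computation tree on ¢ w ¢ evaluates to true. -/
def Accepts (w : List α) : Prop :=
  A.Acc (tape w) (A.c₀, A.v₀)

/-- The language of `A`. -/
def lang : Set (List α) := { w | A.Accepts w }

/-- The nodes of the computation tree of `A` on input `w`, presented as pairs of a
configuration (classical state, unnormalized quantum state) and the remaining tape. -/
inductive Reach (w : List α) : (Fin A.m × (Fin A.n → ℂ)) × List (Option α) → Prop
  | base : Reach w ((A.c₀, A.v₀), tape w)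
  | step {c : Fin A.m} {v : Fin A.n → ℂ} {σ : Option α} {rest : List (Option α)}
      (p : Matrix (Fin A.n) (Fin A.n) ℂ × Fin A.m) :
      Reach w ((c, v), σ :: rest) → p ∈ A.trans c σ → p.1.mulVec v ≠ 0 →
      Reach w ((p.2, p.1.mulVec v), rest)

/-- `A` is two-alternating: along every path of every computation tree, no universal classical
state is ever followed by an existential classical state (equivalently, the sequence of
visited classical states is a block of existential states followed by a block of universal
states). -/
def TwoAlternating : Prop :=
  ∀ (w : List α) (c : Fin A.m) (v : Fin A.n → ℂ) (σ : Option α) (rest : List (Option α)),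
    A.Reach w ((c, v), σ :: rest) → A.isUniv c →
      ∀ p ∈ A.trans c σ, p.1.mulVec v ≠ 0 → A.isUniv p.2

end AQFA

namespace USq

/-- embed a real matrix into ℂ -/
def cm (A : Matrix (Fin 3) (Fin 3) ℝ) : Matrix (Fin 3) (Fin 3) ℂ :=
  A.map (Complex.ofRealHom : ℝ →+* ℂ)

lemma cm_conjTranspose (A : Matrix (Fin 3) (Fin 3) ℝ) : (cm A)ᴴ = cm Aᵀ := by
  ext i j
  simp [cm, Matrix.conjTranspose_apply, Matrix.map_apply, Complex.conj_ofReal]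

lemma cm_mul (A B : Matrix (Fin 3) (Fin 3) ℝ) : cm A * cm B = cm (A * B) :=
  (Matrix.map_mul).symm

lemma cm_add (A B : Matrix (Fin 3) (Fin 3) ℝ) : cm A + cm B = cm (A + B) := by
  ext i j; simp [cm]

lemma cm_one : cm 1 = 1 := by
  ext i j
  by_cases h : i = j <;> simp [cm, Matrix.one_apply, h]

def rEA : Matrix (Fin 3) (Fin 3) ℝ := !![1/5,0,0; 0,1/5,0; 1/5,0,1/5]
def rEB : Matrix (Fin 3) (Fin 3) ℝ := !![1/5,0,0; 1/5,1/5,0; -(1/5), -(4/5), 1/5]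
def rR1 : Matrix (Fin 3) (Fin 3) ℝ := !![1, -(1/4), 0; 0,0,0; 0,0,0]
def rR2 : Matrix (Fin 3) (Fin 3) ℝ := !![0, 1, 16/23; 0,0,0; 0,0,0]
def rR3 : Matrix (Fin 3) (Fin 3) ℝ := !![0,0,1; 0,0,0; 0,0,0]
def rC1 : Matrix (Fin 3) (Fin 3) ℝ := Real.sqrt (4/5) • rR1
def rC2 : Matrix (Fin 3) (Fin 3) ℝ := Real.sqrt (23/100) • rR2
def rC3 : Matrix (Fin 3) (Fin 3) ℝ := Real.sqrt (93/115) • rR3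
def rE3 : Matrix (Fin 3) (Fin 3) ℝ := !![0,0,0;0,0,0;0,0,1]
def rPP : Matrix (Fin 3) (Fin 3) ℝ := !![1,0,0;0,1,0;0,0,0]

def EA := cm rEA
def EB := cm rEB
def C1 := cm rC1
def C2 := cm rC2
def C3 := cm rC3
def E3 := cm rE3
def PP := cm rPP

lemma sqrt_smul_sq (q : ℝ) (hq : 0 ≤ q) (Rm : Matrix (Fin 3) (Fin 3) ℝ) :
    (Real.sqrt q • Rm)ᵀ * (Real.sqrt q • Rm) = q • (Rmᵀ * Rm) := by
  rw [Matrix.transpose_smul, Matrix.smul_mul, Matrix.mul_smul, smul_smul,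
    Real.mul_self_sqrt hq]

lemma valid_c2_real : rEAᵀ * rEA + (rEBᵀ * rEB +
    (rC1ᵀ * rC1 + (rC2ᵀ * rC2 + rC3ᵀ * rC3)))
    = (1 : Matrix (Fin 3) (Fin 3) ℝ) := by
  rw [rC1, rC2, rC3, sqrt_smul_sq _ (by norm_num), sqrt_smul_sq _ (by norm_num),
    sqrt_smul_sq _ (by norm_num)]
  ext i j
  fin_cases i <;> fin_cases j <;>
    simp [rEA, rEB, rR1, rR2, rR3, Matrix.mul_apply, Matrix.transpose_apply, -Matrix.cons_transpose, -Matrix.tail_transpose, -Matrix.head_transpose,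
      Fin.sum_univ_three, Matrix.one_apply, Matrix.vecHead, Matrix.vecTail, Function.comp] <;>
    norm_num

lemma valid_c3_real : rE3ᵀ * rE3 + rPPᵀ * rPP = (1 : Matrix (Fin 3) (Fin 3) ℝ) := by
  ext i j
  fin_cases i <;> fin_cases j <;>
    simp [rE3, rPP, Matrix.mul_apply, Matrix.transpose_apply, -Matrix.cons_transpose, -Matrix.tail_transpose, -Matrix.head_transpose,
      Fin.sum_univ_three, Matrix.one_apply, Matrix.vecHead, Matrix.vecTail, Function.comp]

lemma valid_c2 : EAᴴ * EA + (EBᴴ * EB + (C1ᴴ * C1 + (C2ᴴ * C2 + C3ᴴ * C3)))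
    = (1 : Matrix (Fin 3) (Fin 3) ℂ) := by
  simp only [EA, EB, C1, C2, C3, cm_conjTranspose, cm_mul, cm_add]
  rw [← cm_one, valid_c2_real]

lemma valid_c3 : E3ᴴ * E3 + PPᴴ * PP = (1 : Matrix (Fin 3) (Fin 3) ℂ) := by
  simp only [E3, PP, cm_conjTranspose, cm_mul, cm_add]
  rw [← cm_one, valid_c3_real]

def tr (c : Fin 7) (σ : Option Unit) : List (Matrix (Fin 3) (Fin 3) ℂ × Fin 7) :=
  match c.val, σ with
  | 0, none => [(1,1)]
  | 1, none => [(1,2)]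
  | 2, some _ => [(EA,2),(EB,2),(C1,4),(C2,4),(C3,4)]
  | 2, none => [(1,3)]
  | 3, none => [(E3,5),(PP,6)]
  | 3, some _ => [(1,5)]
  | 5, _ => [(1,5)]
  | 6, _ => [(1,6)]
  | _, _ => [(1,4)]

def M : AQFA Unit where
  m := 7
  n := 3
  isUniv := ![false, false, false, true, false, true, true]
  c₀ := 0
  acceptC := ![false, false, false, false, false, false, true]
  v₀ := ![1, 0, 0]
  v₀_unit := by simp [Fin.sum_univ_three]
  trans := tr
  valid := by
    intro c σ
    fin_cases c <;> rcases σ with _ | ⟨⟩ <;>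
      simp only [tr, List.map_cons, List.map_nil, List.sum_cons, List.sum_nil,
        Matrix.conjTranspose_one, mul_one, add_zero] <;>
      first
        | rfl
        | exact valid_c2
        | exact valid_c3

attribute [reducible] M

end USq

namespace USq

def vec (s : ℂ) (j z : ℤ) : Fin 3 → ℂ := ![s, s * j, s * z]

lemma vec_ne_zero {s : ℂ} (hs : s ≠ 0) (j z : ℤ) : vec s j z ≠ 0 := by
  intro h
  exact hs (by simpa [vec] using congrFun h 0)


lemma EA_mulVec (s : ℂ) (j z : ℤ) :
    EA.mulVec (vec s j z) = vec (s/5) j (z+1) := by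
  funext i
  fin_cases i <;>
    simp [EA, cm, rEA, Matrix.mulVec, dotProduct, Fin.sum_univ_three, vec] <;>
    push_cast <;> ring

lemma EB_mulVec (s : ℂ) (j z : ℤ) :
    EB.mulVec (vec s j z) = vec (s/5) (j+1) (z - 1 - 4*j) := by
  funext i
  fin_cases i <;>
    simp [EB, cm, rEB, Matrix.mulVec, dotProduct, Fin.sum_univ_three, vec] <;>
    push_cast <;> ring

lemma E3_mulVec_eq_zero_iff {s : ℂ} (hs : s ≠ 0) (j z : ℤ) :
    E3.mulVec (vec s j z) = 0 ↔ z = 0 := by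
  constructor
  · intro h
    have h2 := congrFun h 2
    simp [E3, cm, rE3, Matrix.mulVec, dotProduct, Fin.sum_univ_three, vec] at h2
    exact_mod_cast h2.resolve_left hs
  · intro h
    funext i
    fin_cases i <;>
      simp [E3, cm, rE3, Matrix.mulVec, dotProduct, Fin.sum_univ_three, vec, h]

end USq

namespace USq2

open USq

/-- unfold `Acc` at an existential state -/
lemma acc_cons_ex {c : Fin 7} (hc : M.isUniv c = false) (σ : Option Unit)
    (rest : List (Option Unit)) (v : Fin 3 → ℂ) :
    M.Acc (σ :: rest) (c, v) ↔
      ∃ p ∈ M.trans c σ, p.1.mulVec v ≠ 0 ∧ M.Acc rest (p.2, p.1.mulVec v) := by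
  simp only [AQFA.Acc]
  rw [if_neg (by simpa using hc)]

/-- unfold `Acc` at a universal state -/
lemma acc_cons_univ {c : Fin 7} (hc : M.isUniv c = true) (σ : Option Unit)
    (rest : List (Option Unit)) (v : Fin 3 → ℂ) :
    M.Acc (σ :: rest) (c, v) ↔
      ∀ p ∈ M.trans c σ, p.1.mulVec v ≠ 0 → M.Acc rest (p.2, p.1.mulVec v) := by
  simp only [AQFA.Acc]
  rw [if_pos (by simpa using hc)]

lemma acc_nil (c : Fin 7) (v : Fin 3 → ℂ) : M.Acc [] (c, v) ↔ M.acceptC c = true :=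
  Iff.rfl

/-- the existential dead state 4 never accepts -/
lemma acc_dead (l : List (Option Unit)) (v : Fin 3 → ℂ) :
    M.Acc l ((4 : Fin 7), v) ↔ False := by
  simp only [iff_false]
  induction l generalizing v with
  | nil =>
    intro h
    rw [acc_nil] at h
    exact absurd h (by decide)
  | cons σ rest ih =>
    intro h
    rw [acc_cons_ex (by decide)] at h
    obtain ⟨p, hp, _, hacc⟩ := h
    have hp' : p ∈ [((1 : Matrix (Fin 3) (Fin 3) ℂ), (4 : Fin 7))] := by
      cases σ <;> exact hp
    simp at hp'
    subst hp'
    exact ih _ hacc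

lemma arith (k : ℕ) (j z : ℤ) :
    ((∃ d : ℕ, d ≤ k ∧ z + 1 + k = 4*d*j + 2*(d:ℤ)^2) ∨
     (∃ d : ℕ, d ≤ k ∧ z - 1 - 4*j + k = 4*d*(j+1) + 2*(d:ℤ)^2)) ↔
    (∃ d : ℕ, d ≤ k + 1 ∧ z + (k+1 : ℕ) = 4*d*j + 2*(d:ℤ)^2) := by
  constructor
  · rintro (⟨d, hd, he⟩ | ⟨d, hd, he⟩)
    · exact ⟨d, hd.trans (Nat.le_succ k), by push_cast at he ⊢; linarith⟩
    · refine ⟨d + 1, Nat.succ_le_succ hd, ?_⟩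
      push_cast at he ⊢
      ring_nf at he ⊢
      linarith
  · rintro ⟨d, hd, he⟩
    cases d with
    | zero =>
      left
      exact ⟨0, Nat.zero_le _, by push_cast at he ⊢; linarith⟩
    | succ d =>
      right
      refine ⟨d, Nat.succ_le_succ_iff.mp hd, ?_⟩
      push_cast at he ⊢
      ring_nf at he ⊢
      linarith

lemma div5_ne_zero {s : ℂ} (hs : s ≠ 0) : s / 5 ≠ 0 :=
  div_ne_zero hs (by norm_num)

lemma key (k : ℕ) : ∀ (s : ℂ), s ≠ 0 → ∀ (j z : ℤ),
    (M.Acc (List.replicate k (some ()) ++ [none, none]) ((2 : Fin 7), vec s j z) ↔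
      ∃ d : ℕ, d ≤ k ∧ z + k = 4*d*j + 2*(d:ℤ)^2) := by
  induction k with
  | zero =>
    intro s hs j z
    rw [List.replicate_zero, List.nil_append]
    rw [acc_cons_ex (by decide)]
    have ht : M.trans (2 : Fin 7) none = [((1 : Matrix (Fin 3) (Fin 3) ℂ), (3 : Fin 7))] := rfl
    rw [ht]
    simp only [List.mem_singleton, Matrix.one_mulVec, exists_eq_left,
      vec_ne_zero hs, ne_eq, not_false_eq_true, true_and]
    rw [acc_cons_univ (by decide)]
    have ht3 : M.trans (3 : Fin 7) none = [(E3, (5 : Fin 7)), (PP, (6 : Fin 7))] := rfl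
    rw [ht3]
    simp only [List.forall_mem_cons, List.forall_mem_nil, and_true, acc_nil,
      show M.acceptC (5 : Fin 7) = false from rfl,
      show M.acceptC (6 : Fin 7) = true from rfl, ne_eq, not_not]
    simp [AQFA.Acc]
    rw [E3_mulVec_eq_zero_iff hs]
  | succ k ih =>
    intro s hs j z
    rw [List.replicate_succ, List.cons_append]
    rw [acc_cons_ex (by decide)]
    have ht : M.trans (2 : Fin 7) (some ()) =
        [(EA, (2 : Fin 7)), (EB, 2), (C1, 4), (C2, 4), (C3, 4)] := rfl
    rw [ht]
    rw [← arith k j z]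
    constructor
    · rintro ⟨p, hp, hne, hacc⟩
      simp only [List.mem_cons, List.not_mem_nil, or_false] at hp
      rcases hp with h | h | h | h | h <;> subst h
      · left
        rw [EA_mulVec] at hacc
        exact (ih (s/5) (div5_ne_zero hs) j (z+1)).mp hacc
      · right
        rw [EB_mulVec] at hacc
        exact (ih (s/5) (div5_ne_zero hs) (j+1) (z-1-4*j)).mp hacc
      · rw [acc_dead] at hacc; exact hacc.elim
      · rw [acc_dead] at hacc; exact hacc.elim
      · rw [acc_dead] at hacc; exact hacc.elim
    · rintro (h | h)
      · refine ⟨(EA, (2 : Fin 7)), by simp, ?_⟩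
        rw [EA_mulVec]
        exact ⟨vec_ne_zero (div5_ne_zero hs) _ _,
          (ih (s/5) (div5_ne_zero hs) j (z+1)).mpr h⟩
      · refine ⟨(EB, (2 : Fin 7)), by simp, ?_⟩
        rw [EB_mulVec]
        exact ⟨vec_ne_zero (div5_ne_zero hs) _ _,
          (ih (s/5) (div5_ne_zero hs) (j+1) (z-1-4*j)).mpr h⟩

lemma tape_aux (w : List Unit) :
    (List.map some w ++ [none]).flatMap (fun σ => [σ, σ]) =
      List.replicate (2 * w.length) (some ()) ++ [none, none] := by
  induction w with
  | nil => rfl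
  | cons a w ih =>
    cases a
    rw [List.map_cons, List.cons_append, List.flatMap_cons, ih]
    rw [List.length_cons, show 2 * (w.length + 1) = 2 * w.length + 1 + 1 by ring]
    rw [List.replicate_succ, List.replicate_succ]
    rfl

lemma tape_eq (w : List Unit) :
    AQFA.tape w = none :: none ::
      (List.replicate (2 * w.length) (some ()) ++ [none, none]) := by
  show (none :: (w.map some) ++ [none]).flatMap (fun σ => [σ, σ]) = _
  rw [List.cons_append, List.flatMap_cons, tape_aux]
  rfl

lemma twoAlt : M.TwoAlternating := by
  intro w c v σ rest _ hc p hp _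
  fin_cases c
  · exact absurd hc (by decide)
  · exact absurd hc (by decide)
  · exact absurd hc (by decide)
  · -- state 3
    cases σ with
    | none =>
      have hp' : p ∈ [(E3, (5 : Fin 7)), (PP, (6 : Fin 7))] := hp
      simp only [List.mem_cons, List.not_mem_nil, or_false] at hp'
      rcases hp' with h | h <;> subst h <;> decide
    | some u =>
      have hp' : p ∈ [((1 : Matrix (Fin 3) (Fin 3) ℂ), (5 : Fin 7))] := hp
      simp only [List.mem_singleton] at hp'
      subst hp'
      decide
  · exact absurd hc (by decide)
  · -- state 5
    have hp' : p ∈ [((1 : Matrix (Fin 3) (Fin 3) ℂ), (5 : Fin 7))] := by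
      cases σ <;> exact hp
    simp only [List.mem_singleton] at hp'
    subst hp'
    decide
  · -- state 6
    have hp' : p ∈ [((1 : Matrix (Fin 3) (Fin 3) ℂ), (6 : Fin 7))] := by
      cases σ <;> exact hp
    simp only [List.mem_singleton] at hp'
    subst hp'
    decide

lemma lang_eq : M.lang = { w : List Unit | ∃ n : ℕ, w.length = n ^ 2 } := by
  ext w
  simp only [AQFA.lang, Set.mem_setOf_eq]
  show M.Acc (AQFA.tape w) (M.c₀, M.v₀) ↔ _
  rw [tape_eq]
  have hv : M.v₀ = vec 1 0 0 := by
    funext i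
    fin_cases i <;> simp [USq.vec] <;> rfl
  have h1 : (1 : ℂ) ≠ 0 := one_ne_zero
  rw [show (M.c₀ : Fin 7) = (0 : Fin 7) from rfl, hv]
  rw [acc_cons_ex (by decide)]
  have ht0 : M.trans (0 : Fin 7) none = [((1 : Matrix (Fin 3) (Fin 3) ℂ), (1 : Fin 7))] := rfl
  rw [ht0]
  simp only [List.mem_singleton, Matrix.one_mulVec, exists_eq_left,
    vec_ne_zero h1, ne_eq, not_false_eq_true, true_and]
  rw [acc_cons_ex (by decide)]
  have ht1 : M.trans (1 : Fin 7) none = [((1 : Matrix (Fin 3) (Fin 3) ℂ), (2 : Fin 7))] := rfl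
  rw [ht1]
  simp only [List.mem_singleton, Matrix.one_mulVec, exists_eq_left,
    vec_ne_zero h1, ne_eq, not_false_eq_true, true_and]
  rw [key (2 * w.length) 1 h1 0 0]
  constructor
  · rintro ⟨d, -, he⟩
    refine ⟨d, ?_⟩
    have : (w.length : ℤ) = (d : ℤ) ^ 2 := by push_cast at he; linarith
    exact_mod_cast this
  · rintro ⟨n, hn⟩
    refine ⟨n, ?_, ?_⟩
    · have h2 : n ≤ n ^ 2 := Nat.le_self_pow two_ne_zero n
      omega
    · push_cast [hn]
      ring

end USq2

/-- The unary language `USQUARE = {1^m : m = n^2 for some n ≥ 0}` can be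
recognized by a two-alternating AQFA over the unary alphabet `{1}`. -/
theorem usquare_recognized_by_two_alternating_AQFA :
    ∃ A : AQFA Unit, A.TwoAlternating ∧
      A.lang = { w : List Unit | ∃ n : ℕ, w.length = n ^ 2 } := by
  exact ⟨USq.M, USq2.twoAlt, USq2.lang_eq⟩

end
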